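/- Let G=(V,E,W) be a finite graph, m_ij(t) ≥ 0 continuous symmetric rates (m_ij = m_ji for edges). Let (ρ(t),ψ(t)) be a C¹ solution of the system ρ̇_i = Σ_{j∈N(i)} [ −e^{ψ_j−ψ_i} m_ij ρ_i + e^{ψ_i−ψ_j} m_ji ρ_j ], ψ̇_i = −Σ_{j∈N(i)} (e^{ψ_j−ψ_i} − 1) m_ij. Define f_i(t) = ρ_i(t) e^{−ψ_i(t)} and g_i(t) = e^{ψ_i(t)}. Then (f,g) solves the discrete Schrödinger system ḟ_i = Σ_{j∈N(i)} (f_j − f_i) m_ij and ġ_i = −Σ_{j∈N(i)} (g_j − g_i) m_ij. -/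

import Mathlib

/-- Under the Hopf–Cole transform `f_i = ρ_i e^{−ψ_i}`, `g_i = e^{ψ_i}`,
any C¹ solution of the critical-point system of the discrete Schrödinger bridge problem
with continuous, nonnegative, symmetric rates `m_ij(t)` is mapped to a solution of the
discrete Schrödinger system
`ḟ_i = Σ_{j∈N(i)} (f_j − f_i) m_ij`, `ġ_i = −Σ_{j∈N(i)} (g_j − g_i) m_ij`. -/
theorem hopf_cole_to_schrodinger_system {N : ℕ}
    (G : SimpleGraph (Fin N)) [DecidableRel G.Adj]
    (m : Fin N → Fin N → ℝ → ℝ)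
    (hm_cont : ∀ i j, Continuous (m i j))
    (hm_nonneg : ∀ i j, G.Adj i j → ∀ t, 0 ≤ m i j t)
    (hm_symm : ∀ i j, G.Adj i j → ∀ t, m i j t = m j i t)
    (ρ ψ : ℝ → Fin N → ℝ)
    (hρ : ∀ t i, HasDerivAt (fun τ => ρ τ i)
        (∑ j ∈ G.neighborFinset i,
          (- Real.exp (ψ t j - ψ t i) * m i j t * ρ t i
            + Real.exp (ψ t i - ψ t j) * m j i t * ρ t j)) t)
    (hψ : ∀ t i, HasDerivAt (fun τ => ψ τ i)
        (- ∑ j ∈ G.neighborFinset i, (Real.exp (ψ t j - ψ t i) - 1) * m i j t) t) :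
    (∀ t i, HasDerivAt (fun τ => ρ τ i * Real.exp (-(ψ τ i)))
        (∑ j ∈ G.neighborFinset i,
          (ρ t j * Real.exp (-(ψ t j)) - ρ t i * Real.exp (-(ψ t i))) * m i j t) t) ∧
    (∀ t i, HasDerivAt (fun τ => Real.exp (ψ τ i))
        (- ∑ j ∈ G.neighborFinset i,
          (Real.exp (ψ t j) - Real.exp (ψ t i)) * m i j t) t) := by
  constructor
  · intro t i
    have h := (hρ t i).mul ((hψ t i).neg.exp)
    convert h using 1
    · rfl
    · rfl
    · rfl
    rw [neg_neg, Pi.neg_apply, Finset.mul_sum, Finset.mul_sum, Finset.sum_mul, ← Finset.sum_add_distrib]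
    refine Finset.sum_congr rfl fun j hj => ?_
    rw [← hm_symm i j ((G.mem_neighborFinset i j).mp hj) t, Real.exp_sub, Real.exp_sub,
      Real.exp_neg, Real.exp_neg]
    field_simp
    ring
  · intro t i
    have h := (hψ t i).exp
    convert h using 1
    rw [mul_neg, neg_inj, Finset.mul_sum]
    refine Finset.sum_congr rfl fun j hj => ?_
    rw [Real.exp_sub]
    field_simp
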